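/- Fix n ≥ 1, a row-stochastic matrix P ∈ ℝ^{n×n}, rates r : {1,…,n} → ℝ, and q > 0. On the open interval I = {θ ∈ ℝ : q + θ·r(l) > 0 for all l}, define M(θ) by M(θ)_{l,m} = P_{l,m}·q/(q + θ r(l)). Then ρ(M(θ)) > 0 for all θ ∈ I, and the function θ ↦ log ρ(M(θ)) is convex on I. -/

import Mathlib

/-- The spectral radius of a real square matrix: the maximum modulus of its
complex eigenvalues. -/
noncomputable def Matrix.specRad {n : ℕ} (M : Matrix (Fin n) (Fin n) ℝ) : ℝ :=
  (spectralRadius ℂ (M.map (Complex.ofReal : ℝ → ℂ))).toReal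

open Filter Matrix Topology Real
open scoped ENNReal NNReal BigOperators

attribute [local instance] Matrix.linftyOpNormedRing Matrix.linftyOpNormedAlgebra

private lemma holder2 {a b c d t s : ℝ} (ha : 0 ≤ a) (hb : 0 ≤ b) (hc : 0 ≤ c) (hd : 0 ≤ d)
    (ht : 0 ≤ t) (hs : 0 ≤ s) (hts : t + s = 1) :
    a ^ t * b ^ s + c ^ t * d ^ s ≤ (a + c) ^ t * (b + d) ^ s := by
  rcases eq_or_lt_of_le ht with ht0 | ht0
  · have hs1 : s = 1 := by linarith
    simp [← ht0, hs1]
  rcases eq_or_lt_of_le hs with hs0 | hs0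
  · have ht1 : t = 1 := by linarith
    simp [← hs0, ht1]
  rcases eq_or_lt_of_le (add_nonneg ha hc) with hac | hac
  · have ha0 : a = 0 := by linarith [hc, ha]
    have hc0 : c = 0 := by linarith
    rw [ha0, hc0]
    simp [Real.zero_rpow ht0.ne']
  rcases eq_or_lt_of_le (add_nonneg hb hd) with hbd | hbd
  · have hb0 : b = 0 := by linarith
    have hd0 : d = 0 := by linarith
    rw [hb0, hd0]
    simp [Real.zero_rpow hs0.ne']
  have h1 : (a / (a + c)) ^ t * (b / (b + d)) ^ s ≤ t * (a / (a + c)) + s * (b / (b + d)) :=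
    Real.geom_mean_le_arith_mean2_weighted ht hs (div_nonneg ha hac.le) (div_nonneg hb hbd.le) hts
  have h2 : (c / (a + c)) ^ t * (d / (b + d)) ^ s ≤ t * (c / (a + c)) + s * (d / (b + d)) :=
    Real.geom_mean_le_arith_mean2_weighted ht hs (div_nonneg hc hac.le) (div_nonneg hd hbd.le) hts
  have hsum : (a / (a + c)) ^ t * (b / (b + d)) ^ s + (c / (a + c)) ^ t * (d / (b + d)) ^ s ≤ 1 := by
    have : t * (a / (a + c)) + s * (b / (b + d)) + (t * (c / (a + c)) + s * (d / (b + d))) = 1 := by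
      field_simp
      linear_combination (a * b + a * d + b * c + d * c) * hts
    linarith
  have hP : 0 < (a + c) ^ t * (b + d) ^ s :=
    mul_pos (Real.rpow_pos_of_pos hac t) (Real.rpow_pos_of_pos hbd s)
  rw [Real.div_rpow ha hac.le, Real.div_rpow hb hbd.le, Real.div_rpow hc hac.le,
    Real.div_rpow hd hbd.le, div_mul_div_comm, div_mul_div_comm, ← add_div,
    div_le_one hP] at hsum
  linarith

private lemma holder_sum {ι : Type*} (S : Finset ι) (t s : ℝ) (ht : 0 ≤ t) (hs : 0 ≤ s)
    (hts : t + s = 1) (f g h : ι → ℝ)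
    (hf : ∀ i ∈ S, 0 ≤ f i) (hg : ∀ i ∈ S, 0 ≤ g i)
    (hh : ∀ i ∈ S, h i ≤ f i ^ t * g i ^ s) :
    ∑ i ∈ S, h i ≤ (∑ i ∈ S, f i) ^ t * (∑ i ∈ S, g i) ^ s := by
  classical
  induction S using Finset.induction_on with
  | empty => simp; positivity
  | @insert a S ha ih =>
    rw [Finset.sum_insert ha, Finset.sum_insert ha, Finset.sum_insert ha]
    calc h a + ∑ i ∈ S, h i
        ≤ f a ^ t * g a ^ s + (∑ i ∈ S, f i) ^ t * (∑ i ∈ S, g i) ^ s := by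
          gcongr
          · exact hh a (Finset.mem_insert_self a S)
          · exact ih (fun i hi => hf i (Finset.mem_insert_of_mem hi))
              (fun i hi => hg i (Finset.mem_insert_of_mem hi))
              (fun i hi => hh i (Finset.mem_insert_of_mem hi))
      _ ≤ (f a + ∑ i ∈ S, f i) ^ t * (g a + ∑ i ∈ S, g i) ^ s :=
          holder2 (hf a (Finset.mem_insert_self a S))
            (hg a (Finset.mem_insert_self a S))
            (Finset.sum_nonneg fun i hi => hf i (Finset.mem_insert_of_mem hi))
            (Finset.sum_nonneg fun i hi => hg i (Finset.mem_insert_of_mem hi)) ht hs hts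


private lemma pow_entry_nonneg' {N : ℕ} {A : Matrix (Fin N) (Fin N) ℝ}
    (hA : ∀ i j, 0 ≤ A i j) : ∀ (k : ℕ) i j, 0 ≤ (A ^ k) i j := by
  intro k
  induction k with
  | zero => intro i j; by_cases h : i = j <;> simp [Matrix.one_apply, h]
  | succ k ih =>
    intro i j
    rw [pow_succ, Matrix.mul_apply]
    exact Finset.sum_nonneg fun l _ => mul_nonneg (ih i l) (hA l j)

private lemma pow_rowsum_ge' {N : ℕ} {A : Matrix (Fin N) (Fin N) ℝ} {c : ℝ} (hc : 0 ≤ c)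
    (hA : ∀ i j, 0 ≤ A i j) (hrow : ∀ i, c ≤ ∑ j, A i j) :
    ∀ (k : ℕ) i, c ^ k ≤ ∑ j, (A ^ k) i j := by
  intro k
  induction k with
  | zero => intro i; simp [Matrix.one_apply]
  | succ k ih =>
    intro i
    calc c ^ (k + 1) = c * c ^ k := by ring
      _ ≤ (∑ l, A i l) * c ^ k := by
          have := hrow i
          nlinarith [pow_nonneg hc k]
      _ = ∑ l, A i l * c ^ k := by rw [Finset.sum_mul]
      _ ≤ ∑ l, A i l * (∑ j, (A ^ k) l j) :=
          Finset.sum_le_sum fun l _ => mul_le_mul_of_nonneg_left (ih l) (hA i l)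
      _ = ∑ j, (A ^ (k + 1)) i j := by
          simp_rw [pow_succ', Matrix.mul_apply, Finset.mul_sum]
          exact Finset.sum_comm

private lemma specRad_key {N : ℕ} (hN : 1 ≤ N) (A : Matrix (Fin N) (Fin N) ℝ)
    (hA : ∀ i j, 0 ≤ A i j) (c : ℝ) (hc : 0 < c) (hrow : ∀ i, c ≤ ∑ j, A i j) :
    c ≤ A.specRad ∧ (∀ k : ℕ, 0 < ∑ i, ∑ j, (A ^ k) i j) ∧
      Tendsto (fun k : ℕ => (1 / (k : ℝ)) * Real.log (∑ i, ∑ j, (A ^ k) i j)) atTop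
        (𝓝 (Real.log A.specRad)) := by
  haveI : Nonempty (Fin N) := ⟨⟨0, hN⟩⟩
  haveI : CompleteSpace (Matrix (Fin N) (Fin N) ℂ) := FiniteDimensional.complete ℂ _
  set B := A.map (Complex.ofReal : ℝ → ℂ) with hB
  have hBk : ∀ k : ℕ, B ^ k = (A ^ k).map Complex.ofReal := by
    intro k
    have h1 : B = Complex.ofRealHom.mapMatrix A := rfl
    rw [h1, ← map_pow]
    rfl
  set F : ℕ → ℝ := fun k => ∑ i, ∑ j, (A ^ k) i j with hF
  have hFrow : ∀ (k : ℕ) i, ∑ j, (A ^ k) i j ≤ F k := fun k i =>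
    Finset.single_le_sum
      (fun i _ => Finset.sum_nonneg fun j _ => pow_entry_nonneg' hA k i j) (Finset.mem_univ i)
  have hFpos : ∀ k, 0 < F k := fun k =>
    lt_of_lt_of_le (pow_pos hc k) ((pow_rowsum_ge' hc.le hA hrow k ⟨0, hN⟩).trans (hFrow k _))
  have hnorm_ge : ∀ (k : ℕ) i, (∑ j, (A ^ k) i j) ≤ ‖B ^ k‖ := by
    intro k i
    rw [hBk k, Matrix.linfty_opNorm_def]
    have heq : ∑ j, (A ^ k) i j
        = ((∑ j, ‖((A ^ k).map Complex.ofReal) i j‖₊ : ℝ≥0) : ℝ) := by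
      push_cast
      refine Finset.sum_congr rfl fun j _ => ?_
      simp [Matrix.map_apply, Real.norm_eq_abs, abs_of_nonneg (pow_entry_nonneg' hA k i j)]
    rw [heq]
    exact_mod_cast NNReal.coe_le_coe.2
      (Finset.le_sup (f := fun i => ∑ j, ‖((A ^ k).map Complex.ofReal) i j‖₊) (Finset.mem_univ i))
  have hfin : spectralRadius ℂ B ≠ ⊤ :=
    ((spectrum.spectralRadius_le_nnnorm (𝕜 := ℂ) B).trans_lt ENNReal.coe_lt_top).ne
  have hspec : A.specRad = (spectralRadius ℂ B).toReal := rfl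
  have hreal : Tendsto (fun k : ℕ => ‖B ^ k‖ ^ (1 / (k : ℝ))) atTop (𝓝 A.specRad) := by
    have h2 := (ENNReal.tendsto_toReal hfin).comp
      (spectrum.pow_nnnorm_pow_one_div_tendsto_nhds_spectralRadius B)
    rw [hspec]
    refine h2.congr fun k => ?_
    simp only [Function.comp]
    rw [← ENNReal.toReal_rpow, ENNReal.coe_toReal, coe_nnnorm]
  have hnormc : ∀ k, c ^ k ≤ ‖B ^ k‖ := fun k =>
    (pow_rowsum_ge' hc.le hA hrow k ⟨0, hN⟩).trans (hnorm_ge k _)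
  have hBpos : ∀ k, 0 < ‖B ^ k‖ := fun k => lt_of_lt_of_le (pow_pos hc k) (hnormc k)
  have hρ : c ≤ A.specRad := by
    refine ge_of_tendsto hreal ?_
    filter_upwards [eventually_ge_atTop 1] with k hk
    have hk0 : ((k : ℝ)) ≠ 0 := by
      exact_mod_cast Nat.one_le_iff_ne_zero.mp hk
    have hcc : c = (c ^ k) ^ (1 / (k : ℝ)) := by
      rw [← Real.rpow_natCast c k, ← Real.rpow_mul hc.le, mul_one_div, div_self hk0,
        Real.rpow_one]
    rw [hcc]
    exact Real.rpow_le_rpow (pow_nonneg hc.le k) (hnormc k) (by positivity)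
  have hρpos : 0 < A.specRad := lt_of_lt_of_le hc hρ
  have hup : ∀ k : ℕ, 1 ≤ k → A.specRad ≤ F k ^ (1 / (k : ℝ)) := by
    intro k hk
    have hk0 : ((k : ℝ)) ≠ 0 := by exact_mod_cast Nat.one_le_iff_ne_zero.mp hk
    have key : ∀ lam ∈ spectrum ℂ B, ‖lam‖ ^ k ≤ F k := by
      intro lam hlam
      rw [spectrum.mem_iff] at hlam
      have hdet : (algebraMap ℂ (Matrix (Fin N) (Fin N) ℂ) lam - B).det = 0 := by
        by_contra hne
        exact hlam ((Matrix.isUnit_iff_isUnit_det _).2 (isUnit_iff_ne_zero.2 hne))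
      obtain ⟨v, hv0, hv⟩ := (Matrix.exists_mulVec_eq_zero_iff).2 hdet
      have hev : B *ᵥ v = lam • v := by
        rw [Matrix.sub_mulVec, sub_eq_zero] at hv
        rw [← hv, Algebra.algebraMap_eq_smul_one, Matrix.smul_mulVec, Matrix.one_mulVec]
      have hevk : ∀ m : ℕ, (B ^ m) *ᵥ v = lam ^ m • v := by
        intro m
        induction m with
        | zero => simp [Matrix.one_mulVec]
        | succ m ihm =>
          rw [pow_succ, ← Matrix.mulVec_mulVec, hev, Matrix.mulVec_smul, ihm, pow_succ, smul_smul]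
          ring_nf
      obtain ⟨i₀, -, hi₀⟩ := Finset.exists_max_image Finset.univ (fun i => ‖v i‖)
        ⟨⟨0, hN⟩, Finset.mem_univ _⟩
      have hvi₀ : 0 < ‖v i₀‖ := by
        obtain ⟨j, hj⟩ := Function.ne_iff.mp hv0
        exact lt_of_lt_of_le (norm_pos_iff.2 hj) (hi₀ j (Finset.mem_univ j))
      have h1 : ((B ^ k) *ᵥ v) i₀ = lam ^ k * v i₀ := by rw [hevk k]; rfl
      have h2 : ‖((B ^ k) *ᵥ v) i₀‖ ≤ ∑ j, (A ^ k) i₀ j * ‖v j‖ := by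
        have : ((B ^ k) *ᵥ v) i₀ = ∑ j, (B ^ k) i₀ j * v j := by
          simp [Matrix.mulVec, dotProduct]
        rw [this]
        refine (norm_sum_le _ _).trans (le_of_eq (Finset.sum_congr rfl fun j _ => ?_))
        rw [norm_mul, hBk k]
        simp [Matrix.map_apply, Real.norm_eq_abs, abs_of_nonneg (pow_entry_nonneg' hA k i₀ j)]
      have h3 : ∑ j, (A ^ k) i₀ j * ‖v j‖ ≤ F k * ‖v i₀‖ := by
        calc ∑ j, (A ^ k) i₀ j * ‖v j‖ ≤ ∑ j, (A ^ k) i₀ j * ‖v i₀‖ :=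
              Finset.sum_le_sum fun j _ => mul_le_mul_of_nonneg_left
                (hi₀ j (Finset.mem_univ j)) (pow_entry_nonneg' hA k i₀ j)
          _ = (∑ j, (A ^ k) i₀ j) * ‖v i₀‖ := by rw [Finset.sum_mul]
          _ ≤ F k * ‖v i₀‖ := mul_le_mul_of_nonneg_right (hFrow k i₀) hvi₀.le
      have h4 : ‖lam‖ ^ k * ‖v i₀‖ ≤ F k * ‖v i₀‖ := by
        have : ‖lam ^ k * v i₀‖ = ‖lam‖ ^ k * ‖v i₀‖ := by rw [norm_mul, norm_pow]
        rw [← this, ← h1]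
        exact h2.trans h3
      exact le_of_mul_le_mul_right h4 hvi₀
    have hsr : spectralRadius ℂ B ≤ ENNReal.ofReal (F k ^ (1 / (k : ℝ))) := by
      simp only [spectralRadius]
      refine iSup₂_le fun lam hlam => ?_
      rw [← ENNReal.ofReal_coe_nnreal, coe_nnnorm]
      apply ENNReal.ofReal_le_ofReal
      have hl : ‖lam‖ = (‖lam‖ ^ k) ^ (1 / (k : ℝ)) := by
        rw [← Real.rpow_natCast ‖lam‖ k, ← Real.rpow_mul (norm_nonneg lam), mul_one_div,
          div_self hk0, Real.rpow_one]
      rw [hl]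
      exact Real.rpow_le_rpow (by positivity) (key lam hlam) (by positivity)
    rw [hspec]
    exact ENNReal.toReal_le_of_le_ofReal (Real.rpow_nonneg (hFpos k).le _) hsr
  refine ⟨hρ, hFpos, ?_⟩
  have hupper_t : Tendsto
      (fun k : ℕ => (1 / (k : ℝ)) * Real.log N + Real.log (‖B ^ k‖ ^ (1 / (k : ℝ)))) atTop
      (𝓝 (Real.log A.specRad)) := by
    have t1 : Tendsto (fun k : ℕ => (1 / (k : ℝ)) * Real.log N) atTop (𝓝 0) := by
      have := tendsto_const_div_atTop_nhds_zero_nat (Real.log N)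
      refine this.congr fun k => ?_
      ring
    have t2 : Tendsto (fun k : ℕ => Real.log (‖B ^ k‖ ^ (1 / (k : ℝ)))) atTop
        (𝓝 (Real.log A.specRad)) := (Real.continuousAt_log hρpos.ne').tendsto.comp hreal
    simpa using t1.add t2
  refine tendsto_of_tendsto_of_tendsto_of_le_of_le' tendsto_const_nhds hupper_t ?_ ?_
  · filter_upwards [eventually_ge_atTop 1] with k hk
    calc Real.log A.specRad ≤ Real.log (F k ^ (1 / (k : ℝ))) :=
          Real.log_le_log hρpos (hup k hk)
      _ = (1 / (k : ℝ)) * Real.log (F k) := Real.log_rpow (hFpos k) _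
  · filter_upwards [eventually_ge_atTop 1] with k hk
    have hN0 : (0 : ℝ) < N := by exact_mod_cast hN
    have h1 : F k ≤ N * ‖B ^ k‖ := by
      calc F k ≤ ∑ _i : Fin N, ‖B ^ k‖ := Finset.sum_le_sum fun i _ => hnorm_ge k i
        _ = N * ‖B ^ k‖ := by simp [Finset.sum_const, nsmul_eq_mul]
    calc (1 / (k : ℝ)) * Real.log (F k)
        ≤ (1 / (k : ℝ)) * Real.log (N * ‖B ^ k‖) :=
          mul_le_mul_of_nonneg_left (Real.log_le_log (hFpos k) h1) (by positivity)
      _ = (1 / (k : ℝ)) * Real.log N + Real.log (‖B ^ k‖ ^ (1 / (k : ℝ))) := by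
          rw [Real.log_mul hN0.ne' (hBpos k).ne', Real.log_rpow (hBpos k)]
          ring

/-- On the effective domain `I = {θ : q + θ r(l) > 0 ∀ l}`, the spectral
radius of the tilted matrix `M(θ)_{l,m} = P_{l,m} q/(q + θ r(l))` is positive,
and `θ ↦ log ρ(M(θ))` is convex (Kingman log-convexity). -/
theorem scgf_positive_and_convex
    (n : ℕ) (hn : 1 ≤ n)
    (P : Matrix (Fin n) (Fin n) ℝ)
    (hPnn : ∀ l m, 0 ≤ P l m) (hProw : ∀ l, ∑ m, P l m = 1)
    (r : Fin n → ℝ) (q : ℝ) (hq : 0 < q)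
    (I : Set ℝ) (hI : I = {θ : ℝ | ∀ l, 0 < q + θ * r l})
    (M : ℝ → Matrix (Fin n) (Fin n) ℝ)
    (hM : ∀ θ l m, M θ l m = P l m * (q / (q + θ * r l))) :
    (∀ θ ∈ I, 0 < (M θ).specRad) ∧
      ConvexOn ℝ I (fun θ => Real.log ((M θ).specRad)) := by
  haveI : Nonempty (Fin n) := ⟨⟨0, hn⟩⟩
  have hImem : ∀ θ ∈ I, ∀ l, 0 < q + θ * r l := by
    intro θ hθ; rw [hI] at hθ; exact hθ
  have hIconv : ∀ x ∈ I, ∀ y ∈ I, ∀ t s : ℝ, 0 ≤ t → 0 ≤ s → t + s = 1 → t * x + s * y ∈ I := by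
    intro x hx y hy t s ht hs hts
    rw [hI]
    intro l
    have h1 := hImem x hx l
    have h2 := hImem y hy l
    have heq : q + (t * x + s * y) * r l = t * (q + x * r l) + s * (q + y * r l) := by
      linear_combination (-q) * hts
    rw [heq]
    rcases eq_or_lt_of_le ht with ht0 | ht0
    · have hs1 : s = 1 := by linarith
      rw [← ht0, hs1]; linarith
    · have : 0 ≤ s * (q + y * r l) := mul_nonneg hs h2.le
      nlinarith
  have hMnn : ∀ θ ∈ I, ∀ l m, 0 ≤ M θ l m := by
    intro θ hθ l m
    rw [hM]
    have := hImem θ hθ l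
    have := hPnn l m
    positivity
  have KEY : ∀ θ ∈ I, 0 < (M θ).specRad ∧ (∀ k : ℕ, 0 < ∑ i, ∑ j, ((M θ) ^ k) i j) ∧
      Tendsto (fun k : ℕ => (1 / (k : ℝ)) * Real.log (∑ i, ∑ j, ((M θ) ^ k) i j)) atTop
        (𝓝 (Real.log ((M θ).specRad))) := by
    intro θ hθ
    set c := Finset.univ.inf' Finset.univ_nonempty (fun l => q / (q + θ * r l)) with hcdef
    have hcpos : 0 < c := by
      rw [hcdef, Finset.lt_inf'_iff]
      intro l _
      have := hImem θ hθ l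
      positivity
    have hrowEq : ∀ l, ∑ m, M θ l m = q / (q + θ * r l) := by
      intro l
      simp_rw [hM θ]
      rw [← Finset.sum_mul, hProw l, one_mul]
    have hrow : ∀ l, c ≤ ∑ m, M θ l m := by
      intro l
      rw [hrowEq l]
      exact Finset.inf'_le _ (Finset.mem_univ l)
    obtain ⟨h1, h2, h3⟩ := specRad_key hn (M θ) (hMnn θ hθ) c hcpos hrow
    exact ⟨lt_of_lt_of_le hcpos h1, h2, h3⟩
  refine ⟨fun θ hθ => (KEY θ hθ).1, ?_, ?_⟩
  · intro x hx y hy t s ht hs hts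
    simpa [smul_eq_mul] using hIconv x hx y hy t s ht hs hts
  · intro x hx y hy t s ht hs hts
    simp only [smul_eq_mul]
    have hz : t * x + s * y ∈ I := hIconv x hx y hy t s ht hs hts
    set z := t * x + s * y with hzdef
    have hbase : ∀ l m, M z l m ≤ (M x l m) ^ t * (M y l m) ^ s := by
      intro l m
      have hav : 0 < q + x * r l := hImem x hx l
      have hbv : 0 < q + y * r l := hImem y hy l
      have hp : 0 ≤ P l m := hPnn l m
      have hamgm : (q + x * r l) ^ t * (q + y * r l) ^ s
          ≤ t * (q + x * r l) + s * (q + y * r l) :=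
        Real.geom_mean_le_arith_mean2_weighted ht hs hav.le hbv.le hts
      have hABpos : 0 < (q + x * r l) ^ t * (q + y * r l) ^ s :=
        mul_pos (Real.rpow_pos_of_pos hav t) (Real.rpow_pos_of_pos hbv s)
      have hlhs : M z l m = (P l m * q) / (t * (q + x * r l) + s * (q + y * r l)) := by
        rw [hM]
        have heq : q + z * r l = t * (q + x * r l) + s * (q + y * r l) := by
          rw [hzdef]; linear_combination (-q) * hts
        rw [heq, mul_div_assoc]
      have hrhs : (M x l m) ^ t * (M y l m) ^ s
          = (P l m * q) / ((q + x * r l) ^ t * (q + y * r l) ^ s) := by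
        rw [hM, hM, ← mul_div_assoc, ← mul_div_assoc,
          Real.div_rpow (by positivity) hav.le, Real.div_rpow (by positivity) hbv.le,
          div_mul_div_comm, ← Real.rpow_add' (by positivity) (by rw [hts]; norm_num), hts,
          Real.rpow_one]
      rw [hlhs, hrhs]
      gcongr
    have hxnn := hMnn x hx
    have hynn := hMnn y hy
    have hznn := hMnn z hz
    have hpow : ∀ (k : ℕ) i j,
        ((M z) ^ k) i j ≤ (((M x) ^ k) i j) ^ t * (((M y) ^ k) i j) ^ s := by
      intro k
      induction k with
      | zero =>
        intro i j
        by_cases h : i = j <;> simp [Matrix.one_apply, h]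
        positivity
      | succ k ih =>
        intro i j
        calc ((M z) ^ (k + 1)) i j = ∑ l, ((M z) ^ k) i l * M z l j := by
              rw [pow_succ, Matrix.mul_apply]
          _ ≤ (∑ l, ((M x) ^ k) i l * M x l j) ^ t * (∑ l, ((M y) ^ k) i l * M y l j) ^ s := by
              refine holder_sum Finset.univ t s ht hs hts _ _ _
                (fun l _ => mul_nonneg (pow_entry_nonneg' hxnn k i l) (hxnn l j))
                (fun l _ => mul_nonneg (pow_entry_nonneg' hynn k i l) (hynn l j))
                (fun l _ => ?_)
              calc ((M z) ^ k) i l * M z l j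
                  ≤ ((((M x) ^ k) i l) ^ t * (((M y) ^ k) i l) ^ s)
                    * ((M x l j) ^ t * (M y l j) ^ s) := by
                    refine mul_le_mul (ih i l) (hbase l j) (hznn l j) ?_
                    have := pow_entry_nonneg' hxnn k i l
                    have := pow_entry_nonneg' hynn k i l
                    positivity
                _ = (((M x) ^ k) i l * M x l j) ^ t * (((M y) ^ k) i l * M y l j) ^ s := by
                    rw [Real.mul_rpow (pow_entry_nonneg' hxnn k i l) (hxnn l j),
                      Real.mul_rpow (pow_entry_nonneg' hynn k i l) (hynn l j)]
                    ring
          _ = (((M x) ^ (k + 1)) i j) ^ t * (((M y) ^ (k + 1)) i j) ^ s := by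
              rw [pow_succ, Matrix.mul_apply, pow_succ, Matrix.mul_apply]
    have hsum : ∀ k : ℕ, (∑ i, ∑ j, ((M z) ^ k) i j)
        ≤ (∑ i, ∑ j, ((M x) ^ k) i j) ^ t * (∑ i, ∑ j, ((M y) ^ k) i j) ^ s := by
      intro k
      refine holder_sum Finset.univ t s ht hs hts _ _ _
        (fun i _ => Finset.sum_nonneg fun j _ => pow_entry_nonneg' hxnn k i j)
        (fun i _ => Finset.sum_nonneg fun j _ => pow_entry_nonneg' hynn k i j)
        (fun i _ => ?_)
      exact holder_sum Finset.univ t s ht hs hts _ _ _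
        (fun j _ => pow_entry_nonneg' hxnn k i j)
        (fun j _ => pow_entry_nonneg' hynn k i j)
        (fun j _ => hpow k i j)
    obtain ⟨-, hFx, hLx⟩ := KEY x hx
    obtain ⟨-, hFy, hLy⟩ := KEY y hy
    obtain ⟨-, hFz, hLz⟩ := KEY z hz
    refine le_of_tendsto_of_tendsto' hLz ((hLx.const_mul t).add (hLy.const_mul s)) fun k => ?_
    have hlog : Real.log (∑ i, ∑ j, ((M z) ^ k) i j)
        ≤ t * Real.log (∑ i, ∑ j, ((M x) ^ k) i j)
          + s * Real.log (∑ i, ∑ j, ((M y) ^ k) i j) := by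
      have h := Real.log_le_log (hFz k) (hsum k)
      rwa [Real.log_mul (Real.rpow_pos_of_pos (hFx k) t).ne'
        (Real.rpow_pos_of_pos (hFy k) s).ne',
        Real.log_rpow (hFx k), Real.log_rpow (hFy k)] at h
    calc (1 / (k : ℝ)) * Real.log (∑ i, ∑ j, ((M z) ^ k) i j)
        ≤ (1 / (k : ℝ)) * (t * Real.log (∑ i, ∑ j, ((M x) ^ k) i j)
            + s * Real.log (∑ i, ∑ j, ((M y) ^ k) i j)) :=
          mul_le_mul_of_nonneg_left hlog (by positivity)
      _ = t * ((1 / (k : ℝ)) * Real.log (∑ i, ∑ j, ((M x) ^ k) i j))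
          + s * ((1 / (k : ℝ)) * Real.log (∑ i, ∑ j, ((M y) ^ k) i j)) := by ring
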